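/- Let K ⊂ ℝ^n be a nonempty compact set. For every z ∈ int conv K there exists z̄ ∈ ℝ^n such that the closed segment [z − z̄, z + z̄] is contained in int conv K and |z̄| ≥ (1/(2n)) · dist(z, K). -/

import Mathlib

/-- **Geometric lemma.** Let `K ⊆ ℝⁿ` be a nonempty compact set. For every
`z ∈ int conv K` there exists `z̄ ∈ ℝⁿ` such that the closed segment
`[z − z̄, z + z̄]` is contained in `int conv K` and `|z̄| ≥ (1/(2n))·dist(z, K)`. -/
theorem geometric_lemma {n : ℕ}
    (K : Set (EuclideanSpace ℝ (Fin n))) (hK : IsCompact K) (hKne : K.Nonempty)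
    (z : EuclideanSpace ℝ (Fin n)) (hz : z ∈ interior (convexHull ℝ K)) :
    ∃ zbar : EuclideanSpace ℝ (Fin n),
      segment ℝ (z - zbar) (z + zbar) ⊆ interior (convexHull ℝ K) ∧
      ‖zbar‖ ≥ (1 / (2 * (n : ℝ))) * Metric.infDist z K := by
  classical
  have hC : Convex ℝ (convexHull ℝ K) := convex_convexHull ℝ K
  rcases le_or_gt (Metric.infDist z K) 0 with hd | hd
  · refine ⟨0, ?_, ?_⟩
    · intro q hq
      rw [sub_zero, add_zero, segment_same] at hq
      rw [Set.mem_singleton_iff.mp hq]; exact hz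
    · have h0 : Metric.infDist z K = 0 := le_antisymm hd Metric.infDist_nonneg
      simp [h0]
  · -- main case: z ∉ K, in particular n ≥ 1
    have hzK : z ∉ K := fun h => absurd (Metric.infDist_zero_of_mem h) (by linarith)
    have hn : 1 ≤ n := by
      by_contra h
      push_neg at h
      interval_cases n
      · obtain ⟨k, hk⟩ := hKne
        exact hzK (by rwa [Subsingleton.elim z k])
    have hn0 : (0 : ℝ) < n := by exact_mod_cast hn
    -- Carathéodory
    have hzC : z ∈ convexHull ℝ K := interior_subset hz
    rw [convexHull_eq_union] at hzC
    simp only [Set.mem_iUnion] at hzC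
    obtain ⟨t, hts, hai, hzt⟩ := hzC
    have hcard : (t.card : ℝ) ≤ n + 1 := by
      have h1 := hai.card_le_finrank_succ
      have h2 : Module.finrank ℝ (vectorSpan ℝ (Set.range ((↑) : t → EuclideanSpace ℝ (Fin n))))
          ≤ n := by
        have := Submodule.finrank_le (vectorSpan ℝ (Set.range ((↑) : t → EuclideanSpace ℝ (Fin n))))
        rwa [finrank_euclideanSpace_fin] at this
      have : t.card ≤ n + 1 := by
        rw [← Fintype.card_coe t]; omega
      exact_mod_cast this
    obtain ⟨w, hw0, hw1, hwz⟩ := Finset.mem_convexHull'.mp hzt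
    have htne : t.Nonempty := by
      rcases t.eq_empty_or_nonempty with h | h
      · exfalso; rw [h] at hw1; simp at hw1
      · exact h
    -- find a point with big weight
    obtain ⟨y, hyt, hy⟩ : ∃ y ∈ t, 1 / ((n : ℝ) + 1) ≤ w y := by
      apply Finset.exists_le_of_sum_le htne
      rw [hw1, Finset.sum_const, nsmul_eq_mul]
      rw [mul_one_div, div_le_one (by positivity)]
      exact hcard
    have hyK : y ∈ K := hts hyt
    have hlam0 : 0 < w y := lt_of_lt_of_le (by positivity) hy
    have hwsum : w y + ∑ i ∈ t.erase y, w i = 1 := by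
      rw [Finset.add_sum_erase t w hyt]; exact hw1
    have hlam1 : w y < 1 := by
      rcases lt_or_ge (w y) 1 with h | h
      · exact h
      · exfalso
        have hsum : ∑ i ∈ t.erase y, w i = 1 - w y := by linarith
        have hle : w y ≤ 1 := by
          have h0 : (0:ℝ) ≤ ∑ i ∈ t.erase y, w i :=
            Finset.sum_nonneg fun i hi => hw0 i (Finset.mem_of_mem_erase hi)
          linarith
        have heq : w y = 1 := le_antisymm hle h
        have hz0 : ∀ i ∈ t.erase y, w i = 0 := by
          intro i hi
          have h0 : ∀ j ∈ t.erase y, 0 ≤ w j :=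
            fun j hj => hw0 j (Finset.mem_of_mem_erase hj)
          exact (Finset.sum_eq_zero_iff_of_nonneg h0).mp (by linarith) i hi
        have hzy : z = y := by
          have h2 := Finset.add_sum_erase t (fun i => w i • i) hyt
          rw [Finset.sum_eq_zero (fun i hi => by
            beta_reduce; rw [hz0 i hi, zero_smul]), hwz] at h2
          simp only [add_zero, heq, one_smul] at h2
          exact h2.symm
        exact hzK (hzy ▸ hyK)
    have h1lam : (0:ℝ) < 1 - w y := by linarith
    have h1lam' : (1:ℝ) - w y ≠ 0 := ne_of_gt h1lam
    -- the point p beyond z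
    have hmu0 : 0 < w y / (1 - w y) := div_pos hlam0 h1lam
    have hmu' : w y / (1 - w y) ≠ 0 := ne_of_gt hmu0
    have hmun : 1 / (n : ℝ) ≤ w y / (1 - w y) := by
      rw [div_le_div_iff₀ hn0 h1lam]
      have h3 : 1 / ((n:ℝ) + 1) ≤ w y := hy
      rw [div_le_iff₀ (by positivity)] at h3
      nlinarith
    have hpC : z + (w y / (1 - w y)) • (z - y) ∈ convexHull ℝ K := by
      apply convexHull_mono hts
      rw [Finset.mem_convexHull']
      refine ⟨fun i => if i = y then 0 else w i / (1 - w y), ?_, ?_, ?_⟩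
      · intro i hi
        dsimp only
        split
        · exact le_rfl
        · exact div_nonneg (hw0 i hi) h1lam.le
      · have hsum : ∑ i ∈ t.erase y, w i = 1 - w y := by linarith
        rw [← Finset.add_sum_erase t _ hyt]
        simp only [if_pos]
        rw [zero_add, Finset.sum_congr rfl (fun i hi => by
          rw [if_neg (Finset.ne_of_mem_erase hi)])]
        rw [← Finset.sum_div, hsum, div_self h1lam']
      · have hvec : ∑ i ∈ t.erase y, w i • i = z - w y • y := by
          have h2 := Finset.add_sum_erase t (fun i => w i • i) hyt
          beta_reduce at h2
          rw [hwz] at h2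
          rw [← h2]; abel
        rw [← Finset.add_sum_erase t _ hyt]
        simp only [if_pos]
        rw [zero_smul, zero_add]
        rw [Finset.sum_congr rfl (fun i hi => by
          rw [if_neg (Finset.ne_of_mem_erase hi)])]
        have hrw : ∑ i ∈ t.erase y, (w i / (1 - w y)) • i
            = (1 / (1 - w y)) • ∑ i ∈ t.erase y, w i • i := by
          rw [Finset.smul_sum]
          exact Finset.sum_congr rfl fun i hi => by
            rw [smul_smul]; congr 1; field_simp
        rw [hrw, hvec]
        match_scalars <;> field_simp <;> ring
    -- the candidate zbar
    refine ⟨(1 / (2 * (n:ℝ))) • (z - y), ?_, ?_⟩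
    · rintro q ⟨a, b, ha, hb, hab, rfl⟩
      obtain rfl : b = 1 - a := by linarith
      have hq : a • (z - (1 / (2 * (n:ℝ))) • (z - y)) + (1-a) • (z + (1 / (2 * (n:ℝ))) • (z - y))
          = z + (((1-a) - a) * (1 / (2 * (n:ℝ)))) • (z - y) := by
        match_scalars <;> ring
      rw [hq]
      set u := ((1-a) - a) * (1 / (2 * (n:ℝ))) with hu
      have hu_le : u ≤ 1 / (2 * (n:ℝ)) := by
        rw [hu]
        have h4 : (1-a) - a ≤ 1 := by linarith
        nlinarith [one_div_pos.mpr (show (0:ℝ) < 2*n by positivity)]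
      have hu_ge : -(1 / (2 * (n:ℝ))) ≤ u := by
        rw [hu]
        have h4 : -1 ≤ (1-a) - a := by linarith
        nlinarith [one_div_pos.mpr (show (0:ℝ) < 2*n by positivity)]
      have h1n : (1:ℝ) ≤ n := by exact_mod_cast hn
      have h2n : 1 / (2 * (n:ℝ)) ≤ 1/2 :=
        one_div_le_one_div_of_le (by norm_num) (by linarith)
      rcases lt_trichotomy u 0 with hu0 | hu0 | hu0
      · -- q between y and z
        have hq2 : z + u • (z - y) = (1 + u) • z + (-u) • y := by
          match_scalars <;> ring
        rw [hq2]
        exact hC.combo_interior_self_mem_interior hz (subset_convexHull ℝ K hyK) (by linarith) (by linarith)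
          (by ring)
      · rw [hu0, zero_smul, add_zero]; exact hz
      · -- q between z and p
        set mu := w y / (1 - w y) with hmu
        have hs1 : u / mu < 1 := by
          rw [div_lt_one hmu0]
          calc u ≤ 1 / (2*(n:ℝ)) := hu_le
            _ < 1 / (n:ℝ) := by
                apply div_lt_div_of_pos_left one_pos hn0; linarith
            _ ≤ mu := hmun
        have hq2 : z + u • (z - y) = (1 - u / mu) • z + (u / mu) • (z + mu • (z - y)) := by
          match_scalars <;> field_simp <;> ring
        rw [hq2]
        exact hC.combo_interior_self_mem_interior hz hpC (by linarith)
          (le_of_lt (div_pos hu0 hmu0)) (by ring)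
    · rw [norm_smul]
      have hdist : Metric.infDist z K ≤ ‖z - y‖ := by
        rw [← dist_eq_norm]
        exact Metric.infDist_le_dist_of_mem hyK
      have h2n : (0:ℝ) < 1 / (2*(n:ℝ)) := by positivity
      calc (1 / (2 * (n:ℝ))) * Metric.infDist z K
          ≤ (1 / (2 * (n:ℝ))) * ‖z - y‖ := by
            exact mul_le_mul_of_nonneg_left hdist h2n.le
        _ = ‖(1 / (2 * (n:ℝ)))‖ * ‖z - y‖ := by
            rw [Real.norm_eq_abs, abs_of_pos h2n]
        _ = _ := rfl
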